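/- Let p and q be distinct equal-length words over a finite alphabet with equal sets of proper borders. Then for every n, the number of length-n words avoiding p equals the number of length-n words avoiding q. -/

import Mathlib

open List

/-- A nonempty word `x` is a border of `p` if it is both a prefix and a suffix of `p`. -/
def Border {α : Type*} (x p : List α) : Prop := x ≠ [] ∧ x <+: p ∧ x <:+ p

/-- A proper border is a border different from the word itself. -/
def ProperBorder {α : Type*} (x p : List α) : Prop := Border x p ∧ x ≠ p

/-- The border length set of `p`. -/
def borderLengths {α : Type*} (p : List α) : Set ℕ :=
  {n | ∃ x, Border x p ∧ x.length = n}

/-- `replL q p w` replaces the leftmost contiguous occurrence of `q` in `w` by `p`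
(identity if there is no occurrence). -/
def replL {α : Type*} [DecidableEq α] (q p : List α) : List α → List α
  | [] => []
  | a :: w => if q <+: (a :: w) then p ++ (a :: w).drop q.length else a :: replL q p w

/-- `replR p q w` replaces the rightmost contiguous occurrence of `p` in `w` by `q`
(identity if there is no occurrence). -/
def replR {α : Type*} [DecidableEq α] (p q : List α) : List α → List α
  | [] => []
  | a :: w =>
    if p <:+: w then a :: replR p q w
    else if p <+: (a :: w) then q ++ (a :: w).drop p.length
    else a :: w

/-- `phiL q p w` iterates `replL q p` a minimal number of times so that no occurrence
of `q` remains (if such an iterate exists). -/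
noncomputable def phiL {α : Type*} [DecidableEq α] (q p : List α) (w : List α) : List α :=
  (replL q p)^[sInf {i | ¬ q <:+: (replL q p)^[i] w}] w

/-- `phiR p q w` iterates `replR p q` a minimal number of times so that no occurrence
of `p` remains (if such an iterate exists). -/
noncomputable def phiR {α : Type*} [DecidableEq α] (p q : List α) (w : List α) : List α :=
  (replR p q)^[sInf {j | ¬ p <:+: (replR p q)^[j] w}] w

section GO

variable {α : Type*} [Fintype α] [DecidableEq α]

/-- All words of length `n`. -/
def WL (α : Type*) [Fintype α] [DecidableEq α] (n : ℕ) : Finset (List α) :=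
  (Finset.univ : Finset (List.Vector α n)).image List.Vector.toList

lemma mem_WL {n : ℕ} {w : List α} : w ∈ WL α n ↔ w.length = n := by
  constructor
  · rintro h
    simp only [WL, Finset.mem_image] at h
    obtain ⟨v, -, rfl⟩ := h
    exact v.toList_length
  · intro h
    simp only [WL, Finset.mem_image]
    exact ⟨⟨w, h⟩, Finset.mem_univ _, rfl⟩

/-- Words of length `n` avoiding `p`. -/
def Avoid (p : List α) (n : ℕ) : Finset (List α) :=
  (WL α n).filter (fun w => ¬ p <:+: w)

/-- Words of length `n` whose unique occurrence of `p` is as a suffix. -/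
def CEnd (p : List α) (n : ℕ) : Finset (List α) :=
  (WL α n).filter (fun w => p <:+ w ∧ ¬ p <:+: w.dropLast)

lemma suffix_take_infix {p u : List α} {e : ℕ} (h : p <:+ u.take e) : p <:+: u :=
  h.isInfix.trans (take_prefix e u).isInfix

lemma infix_exists_take {p u : List α} (h : p <:+: u) :
    ∃ e ≤ u.length, p <:+ u.take e := by
  obtain ⟨s, t, rfl⟩ := h
  refine ⟨s.length + p.length, by simp, ?_⟩
  have h1 : (s ++ p ++ t).take (s.length + p.length) = s ++ p := by
    simpa using take_left (l₁ := s ++ p) (l₂ := t)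
  rw [h1]
  exact suffix_append s p

lemma infix_dropLast_or_suffix {p u : List α} (hp : p ≠ []) (h : p <:+: u) :
    p <:+ u ∨ p <:+: u.dropLast := by
  obtain ⟨s, t, rfl⟩ := h
  rcases eq_or_ne t [] with rfl | ht
  · left; simpa using suffix_append s p
  · right
    have h1 : s ++ p ++ t = (s ++ p ++ t.dropLast) ++ [t.getLast ht] := by
      conv_lhs => rw [← dropLast_append_getLast ht]
      rw [List.append_assoc (s ++ p)]
    rw [h1, dropLast_concat]
    exact ⟨s, t.dropLast, by simp⟩

lemma mem_Avoid {p w : List α} {n : ℕ} :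
    w ∈ Avoid p n ↔ w.length = n ∧ ¬ p <:+: w := by
  simp [Avoid, Finset.mem_filter, mem_WL]

lemma mem_CEnd {p w : List α} {n : ℕ} :
    w ∈ CEnd p n ↔ w.length = n ∧ p <:+ w ∧ ¬ p <:+: w.dropLast := by
  simp [CEnd, Finset.mem_filter, mem_WL]

/-- Recurrence 1: appending a letter. -/
lemma card_step (p : List α) (hp : p ≠ []) (n : ℕ) :
    (Avoid p n).card * Fintype.card α =
      (Avoid p (n+1)).card + (CEnd p (n+1)).card := by
  classical
  have hdisj : Disjoint (Avoid p (n+1)) (CEnd p (n+1)) := by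
    rw [Finset.disjoint_left]
    intro u hu hu'
    exact (mem_Avoid.mp hu).2 (mem_CEnd.mp hu').2.1.isInfix
  have hlen1 : ∀ u ∈ Avoid p (n+1) ∪ CEnd p (n+1), u ≠ [] := by
    intro u hu h0
    rcases Finset.mem_union.mp hu with h | h
    · rw [h0] at h; exact by simpa using (mem_Avoid.mp h).1
    · rw [h0] at h; exact by simpa using (mem_CEnd.mp h).1
  rw [← Finset.card_union_of_disjoint hdisj, ← Finset.card_univ, ← Finset.card_product]
  refine Finset.card_bij' (fun x _ => x.1 ++ [x.2])
    (fun u hu => (u.dropLast, u.getLast (hlen1 u hu))) ?_ ?_ ?_ ?_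
  · rintro ⟨w, a⟩ hx
    have hw := mem_Avoid.mp (Finset.mem_product.mp hx).1
    have hlen2 : (w ++ [a]).length = n + 1 := by simp [hw.1]
    by_cases hocc : p <:+: (w ++ [a])
    · apply Finset.mem_union_right
      rcases infix_dropLast_or_suffix hp hocc with hs | hid
      · exact mem_CEnd.mpr ⟨hlen2, hs, by rw [dropLast_concat]; exact hw.2⟩
      · rw [dropLast_concat] at hid; exact absurd hid hw.2
    · exact Finset.mem_union_left _ (mem_Avoid.mpr ⟨hlen2, hocc⟩)
  · intro u hu
    have hul : u.length = n + 1 := by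
      rcases Finset.mem_union.mp hu with h | h
      · exact (mem_Avoid.mp h).1
      · exact (mem_CEnd.mp h).1
    have hnd : ¬ p <:+: u.dropLast := by
      rcases Finset.mem_union.mp hu with h | h
      · intro hc
        exact (mem_Avoid.mp h).2
          (hc.trans ((dropLast_eq_take (l := u) ▸ take_prefix (u.length - 1) u).isInfix))
      · exact (mem_CEnd.mp h).2.2
    refine Finset.mem_product.mpr ⟨mem_Avoid.mpr ⟨?_, hnd⟩, Finset.mem_univ _⟩
    rw [List.length_dropLast, hul]
    omega
  · rintro ⟨w, a⟩ hx
    have h1 : (w ++ [a]).dropLast = w := dropLast_concat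
    have h2 : (w ++ [a]).getLast (by simp) = a := getLast_concat (l := w)
    simp only [h1]
    exact Prod.ext rfl (getLast_concat (l := w))
  · intro u hu
    exact dropLast_append_getLast (hlen1 u hu)

/-- The correlation index set of `p`. -/
def DD (p : List α) : Finset ℕ :=
  (Finset.Icc 1 p.length).filter (fun d => p.take d = p.drop (p.length - d))

lemma length_mem_DD {p : List α} (hp : p ≠ []) : p.length ∈ DD p := by
  simp only [DD, Finset.mem_filter, Finset.mem_Icc]
  refine ⟨⟨List.length_pos_iff.mpr hp, le_refl _⟩, ?_⟩
  simp [take_length]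

lemma exists_occ (p w : List α) : ∃ e, p <:+ (w ++ p).take e :=
  ⟨(w ++ p).length, by rw [take_length]; exact suffix_append w p⟩

/-- End position of the first occurrence of `p` in `w ++ p`. -/
def fOcc (p w : List α) : ℕ := Nat.find (exists_occ p w)

/-- Recurrence 2: appending `p` to an avoider. -/
lemma card_appendp (p : List α) (hp : p ≠ []) (n : ℕ) :
    (Avoid p n).card = ∑ d ∈ DD p, (CEnd p (n+d)).card := by
  classical
  rw [← Finset.card_sigma]
  have hLpos : 0 < p.length := List.length_pos_iff.mpr hp
  refine Finset.card_bij'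
    (fun w _ => ⟨fOcc p w - n, (w ++ p).take (fOcc p w)⟩)
    (fun x _ => x.2.take n) ?_ ?_ ?_ ?_
  · intro w hw
    obtain ⟨hw1, hw2⟩ := mem_Avoid.mp hw
    set L := p.length with hLdef
    set u := w ++ p with hu
    set m := fOcc p w with hm
    have hspec : p <:+ u.take m := Nat.find_spec (exists_occ p w)
    have hulen : u.length = n + L := by simp [hu, hw1, hLdef]
    have hm_le : m ≤ n + L := by
      apply Nat.find_min'
      rw [← hulen, take_length]
      exact suffix_append w p
    have hm_gt : n < m := by
      by_contra h
      push_neg at h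
      have h1 : u.take m = w.take m := take_append_of_le_length (by omega)
      rw [h1] at hspec
      exact hw2 (suffix_take_infix hspec)
    have htlen : (u.take m).length = m := by
      rw [length_take]; omega
    have hL_le : L ≤ m := by
      have := hspec.length_le
      omega
    -- border property
    have hborder : p.take (m - n) = p.drop (L - (m - n)) := by
      obtain ⟨z, hz⟩ := hspec
      have hzlen : z.length = m - L := by
        have h5 : (z ++ p).length = m := by rw [hz, htlen]
        rw [List.length_append] at h5; omega
      have lhs : (z ++ p).drop n = p.drop (L - (m - n)) := by
        rw [drop_append, drop_eq_nil_of_le (by omega), nil_append, hzlen,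
          show n - (m - L) = L - (m - n) from by omega]
      have rhs : (u.take m).drop n = p.take (m - n) := by
        rw [drop_take]
        have : u.drop n = p := by
          rw [hu, ← hw1]; exact drop_left (l₁ := w) (l₂ := p)
        rw [this]
      rw [hz] at lhs
      rw [← rhs, lhs]
    refine Finset.mem_sigma.mpr ⟨?_, ?_⟩
    · show m - n ∈ DD p
      simp only [DD, Finset.mem_filter, Finset.mem_Icc]
      exact ⟨⟨by omega, by omega⟩, hborder⟩
    · show u.take m ∈ CEnd p (n + (m - n))
      refine mem_CEnd.mpr ⟨by rw [length_take]; omega, hspec, ?_⟩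
      intro hc
      have hdl : (u.take m).dropLast = u.take (m - 1) := by
        rw [dropLast_eq_take, htlen, take_take,
          show min (m-1) m = m - 1 from by omega]
      rw [hdl] at hc
      obtain ⟨e, he1, he2⟩ := infix_exists_take hc
      rw [length_take] at he1
      have he3 : (u.take (m-1)).take e = u.take e := by
        rw [take_take, show min e (m-1) = e from by omega]
      rw [he3] at he2
      exact Nat.find_min (exists_occ p w) (show e < m from by omega) he2
  · rintro ⟨d, v⟩ hx
    dsimp only
    obtain ⟨hd0, hv0⟩ := Finset.mem_sigma.mp hx
    have hd : d ∈ DD p := hd0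
    have hv : v ∈ CEnd p (n + d) := hv0
    clear hd0 hv0
    simp only [DD, Finset.mem_filter, Finset.mem_Icc] at hd
    obtain ⟨⟨hd1, hd2⟩, -⟩ := hd
    obtain ⟨hv1, hv2, hv3⟩ := mem_CEnd.mp hv
    refine mem_Avoid.mpr ⟨by rw [length_take]; omega, ?_⟩
    intro hc
    have h1 : v.take n <+: v.dropLast := by
      rw [dropLast_eq_take, hv1,
        show v.take n = (v.take (n + d - 1)).take n by
          rw [take_take, show min n (n + d - 1) = n from by omega]]
      exact take_prefix _ _
    exact hv3 (hc.trans h1.isInfix)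
  · intro w hw
    obtain ⟨hw1, hw2⟩ := mem_Avoid.mp hw
    have hm_gt : n < fOcc p w := by
      by_contra h
      push_neg at h
      have h1 : (w ++ p).take (fOcc p w) = w.take (fOcc p w) :=
        take_append_of_le_length (by omega)
      have hspec : p <:+ (w ++ p).take (fOcc p w) := Nat.find_spec (exists_occ p w)
      rw [h1] at hspec
      exact hw2 (suffix_take_infix hspec)
    dsimp only
    rw [take_take, min_eq_left (by omega),
      take_append_of_le_length (le_of_eq hw1.symm), ← hw1, take_length]
  · rintro ⟨d, v⟩ hx
    dsimp only
    obtain ⟨hd0, hv0⟩ := Finset.mem_sigma.mp hx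
    have hd : d ∈ DD p := hd0
    have hv : v ∈ CEnd p (n + d) := hv0
    clear hd0 hv0
    simp only [DD, Finset.mem_filter, Finset.mem_Icc] at hd
    obtain ⟨⟨hd1, hd2⟩, hdb⟩ := hd
    obtain ⟨hv1, hv2, hv3⟩ := mem_CEnd.mp hv
    set L := p.length with hLdef
    have hLle : L ≤ n + d := hv1 ▸ hv2.length_le
    -- v.drop n = p.drop (L - d)
    have hH : v.drop n = p.drop (L - d) := by
      obtain ⟨y, hy⟩ := hv2
      have hylen : y.length = n + d - L := by
        have : (y ++ p).length = n + d := by rw [hy, hv1]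
        simp at this; omega
      rw [← hy, drop_append, drop_eq_nil_of_le (by omega), hylen]
      rw [show n - (n + d - L) = L - d by omega]
      simp
    -- u = v.take n ++ p equals v ++ p.drop d
    have hJ : v.take n ++ p = v ++ p.drop d := by
      conv_rhs => rw [← take_append_drop n v, hH]
      rw [List.append_assoc]
      congr 1
      rw [← hdb]
      exact (take_append_drop d p).symm
    have hutake : (v.take n ++ p).take (n + d) = v := by
      rw [hJ, take_append_of_le_length (by rw [hv1]), ← hv1, take_length]
    have hdll : v.dropLast = v.take (n + d - 1) := by
      rw [dropLast_eq_take, hv1]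
    -- fOcc = n + d
    have hfind : fOcc p (v.take n) = n + d := by
      rw [fOcc, Nat.find_eq_iff]
      constructor
      · rw [hutake]; exact hv2
      · intro e he hc
        have h1 : (v.take n ++ p).take e = v.take e := by
          conv_lhs => rw [show e = min e (n + d) from by omega, ← take_take,
            hutake]
        rw [h1] at hc
        have h2 : v.take e = (v.take (n + d - 1)).take e := by
          rw [take_take, show min e (n + d - 1) = e from by omega]
        rw [h2, ← hdll] at hc
        exact hv3 (suffix_take_infix hc)
    rw [hfind, hutake, show n + d - n = d from by omega]

lemma main_ind (p q : List α) (hp : p ≠ []) (hq : q ≠ [])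
    (hlen : p.length = q.length) (hD : DD p = DD q) :
    ∀ n, (Avoid p n).card = (Avoid q n).card ∧ (CEnd p n).card = (CEnd q n).card := by
  have hLpos : 0 < p.length := List.length_pos_iff.mpr hp
  intro n
  induction n using Nat.strong_induction_on with
  | _ n IH =>
    rcases lt_or_ge n p.length with hn | hn
    · constructor
      · have e1 : Avoid p n = WL α n := by
          apply Finset.filter_true_of_mem
          intro w hw hc
          have := hc.length_le
          rw [mem_WL.mp hw] at this
          omega
        have e2 : Avoid q n = WL α n := by
          apply Finset.filter_true_of_mem
          intro w hw hc
          have := hc.length_le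
          rw [mem_WL.mp hw, ← hlen] at this
          omega
        rw [e1, e2]
      · have e1 : CEnd p n = ∅ := by
          rw [Finset.eq_empty_iff_forall_notMem]
          intro w hw
          obtain ⟨h1, h2, -⟩ := mem_CEnd.mp hw
          have := h2.length_le
          omega
        have e2 : CEnd q n = ∅ := by
          rw [Finset.eq_empty_iff_forall_notMem]
          intro w hw
          obtain ⟨h1, h2, -⟩ := mem_CEnd.mp hw
          have := h2.length_le
          omega
        rw [e1, e2]
    · -- n ≥ p.length
      have hn0 : n - p.length < n := by omega
      obtain ⟨IH0a, -⟩ := IH (n - p.length) hn0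
      have R2p := card_appendp p hp (n - p.length)
      have R2q := card_appendp q hq (n - p.length)
      rw [← hD] at R2q
      have hLmem : p.length ∈ DD p := length_mem_DD hp
      rw [← Finset.sum_erase_add _ _ hLmem] at R2p
      rw [← Finset.sum_erase_add _ _ hLmem] at R2q
      rw [show n - p.length + p.length = n from by omega] at R2p R2q
      have hsum : ∑ d ∈ (DD p).erase p.length, (CEnd p (n - p.length + d)).card
                = ∑ d ∈ (DD p).erase p.length, (CEnd q (n - p.length + d)).card := by
        apply Finset.sum_congr rfl
        intro d hd
        have hd' : d ∈ DD p := Finset.mem_of_mem_erase hd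
        simp only [DD, Finset.mem_filter, Finset.mem_Icc] at hd'
        have hdne : d ≠ p.length := Finset.ne_of_mem_erase hd
        exact (IH (n - p.length + d) (by omega)).2
      have hC : (CEnd p n).card = (CEnd q n).card := by omega
      refine ⟨?_, hC⟩
      have hn1 : n - 1 < n := by omega
      obtain ⟨IH1, -⟩ := IH (n - 1) hn1
      have R1p := card_step p hp (n - 1)
      have R1q := card_step q hq (n - 1)
      rw [show n - 1 + 1 = n from by omega] at R1p R1q
      rw [IH1] at R1p
      omega

end GO

lemma border_iff {α : Type*} (p : List α) (d : ℕ) (h1 : 1 ≤ d) (h2 : d < p.length) :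
    p.take d = p.drop (p.length - d) ↔ ∃ x, ProperBorder x p ∧ x.length = d := by
  have hdl : (p.take d).length = d := by
    rw [length_take]; omega
  constructor
  · intro h
    refine ⟨p.take d, ⟨⟨?_, take_prefix d p, h ▸ drop_suffix (p.length - d) p⟩, ?_⟩, hdl⟩
    · intro h0
      rw [h0] at hdl
      simp at hdl
      omega
    · intro h0
      rw [h0] at hdl
      omega
  · rintro ⟨x, ⟨⟨hx0, hpre, hsuf⟩, -⟩, hlenx⟩
    have e1 : x = p.take d := by
      rw [prefix_iff_eq_take] at hpre
      rw [← hlenx]; exact hpre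
    have e2 : x = p.drop (p.length - d) := by
      rw [suffix_iff_eq_drop] at hsuf
      rw [← hlenx]; exact hsuf
    rw [← e1, ← e2]

theorem stmt_11 {α : Type*} [Fintype α] [DecidableEq α] {p q : List α}
    (hne : p ≠ q) (hlen : p.length = q.length)
    (hpb : {x | ProperBorder x p} = {x | ProperBorder x q}) (n : ℕ) :
    {w : List α | w.length = n ∧ ¬ p <:+: w}.ncard =
      {w : List α | w.length = n ∧ ¬ q <:+: w}.ncard := by
  classical
  have hp : p ≠ [] := by
    intro h
    apply hne
    rw [h]
    symm
    rw [← List.length_eq_zero_iff, ← hlen, h]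
    rfl
  have hq : q ≠ [] := by
    intro h
    apply hp
    rw [← List.length_eq_zero_iff, hlen, h]
    rfl
  have hpb' : ∀ x, ProperBorder x p ↔ ProperBorder x q := fun x => Set.ext_iff.mp hpb x
  have key : ∀ d, 1 ≤ d → d ≤ p.length →
      (p.take d = p.drop (p.length - d) ↔ q.take d = q.drop (q.length - d)) := by
    intro d h1 h2
    rcases eq_or_lt_of_le h2 with rfl | hdlt
    · constructor <;> intro _
      · rw [hlen, take_length, show q.length - q.length = 0 from by omega, drop_zero]
      · rw [take_length, Nat.sub_self, drop_zero]
    · rw [border_iff p d h1 hdlt, border_iff q d h1 (hlen ▸ hdlt)]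
      constructor <;> rintro ⟨x, hx, hxl⟩
      · exact ⟨x, (hpb' x).mp hx, hxl⟩
      · exact ⟨x, (hpb' x).mpr hx, hxl⟩
  have hD : DD p = DD q := by
    ext d
    simp only [DD, Finset.mem_filter, Finset.mem_Icc]
    constructor
    · rintro ⟨⟨h1, h2⟩, h3⟩
      exact ⟨⟨h1, by omega⟩, (key d h1 h2).mp h3⟩
    · rintro ⟨⟨h1, h2⟩, h3⟩
      have h2' : d ≤ p.length := by omega
      exact ⟨⟨h1, h2'⟩, (key d h1 h2').mpr h3⟩
  have e1 : {w : List α | w.length = n ∧ ¬ p <:+: w} = ↑(Avoid p n) := by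
    ext w
    simp [mem_Avoid, Set.mem_setOf_eq]
  have e2 : {w : List α | w.length = n ∧ ¬ q <:+: w} = ↑(Avoid q n) := by
    ext w
    simp [mem_Avoid, Set.mem_setOf_eq]
  rw [e1, e2, Set.ncard_coe_finset, Set.ncard_coe_finset]
  exact (main_ind p q hp hq hlen hD n).1
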